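/- Let A be a measure (nonnegative weight vector) on a finite set, and let Gamma_s A be its Bregman (KL) projection onto the set of 1/s-dense distributions. Then the projection has the closed form (Gamma_s A)_a = (1/s) * min{1, c*A_a}, where c > 0 is chosen such that sum_a min{1, c*A_a} = s. -/

import Mathlib

open Real Finset

/-- Convexity (first-order) bound for `x ↦ x * log (x / A)`. -/
lemma key_ineq (x y A : ℝ) (hx : 0 ≤ x) (hy : 0 < y) (hA : 0 < A) :
    y * Real.log (y / A) + (x - y) * (Real.log (y / A) + 1) ≤ x * Real.log (x / A) := by
  rcases eq_or_lt_of_le hx with h | h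
  · rw [← h]
    have : (0:ℝ) / A = 0 := zero_div A
    rw [this, Real.log_zero]
    nlinarith
  · have h1 : Real.log (y / x) ≤ y / x - 1 := Real.log_le_sub_one_of_pos (by positivity)
    have h2 : Real.log (x / A) = Real.log x - Real.log A := Real.log_div h.ne' hA.ne'
    have h3 : Real.log (y / A) = Real.log y - Real.log A := Real.log_div hy.ne' hA.ne'
    have h4 : Real.log (y / x) = Real.log y - Real.log x := Real.log_div hy.ne' h.ne'
    have h5 : x * Real.log (y / x) ≤ x * (y / x - 1) :=
      mul_le_mul_of_nonneg_left h1 h.le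
    have h6 : x * (y / x - 1) = y - x := by field_simp
    rw [h6, h4] at h5
    nlinarith

theorem bregman_projection_closed_form {n : ℕ} (A : Fin n → ℝ) (hA : ∀ a, 0 < A a)
    (s : ℝ) (hs : 1 ≤ s) (hsn : s ≤ n) (c : ℝ) (hc : 0 < c)
    (hcs : ∑ a : Fin n, min 1 (c * A a) = s) :
    (∀ a : Fin n, 0 ≤ (1 / s) * min 1 (c * A a)) ∧
    (∀ a : Fin n, (1 / s) * min 1 (c * A a) ≤ 1 / s) ∧
    (∑ a : Fin n, (1 / s) * min 1 (c * A a)) = 1 ∧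
    ∀ P : Fin n → ℝ, (∀ a, 0 ≤ P a) → (∀ a, P a ≤ 1 / s) →
      (∑ a : Fin n, P a) = 1 →
      (∑ a : Fin n, (1 / s) * min 1 (c * A a) *
          Real.log ((1 / s) * min 1 (c * A a) / A a)) ≤
        ∑ a : Fin n, P a * Real.log (P a / A a) := by
  have hs0 : (0:ℝ) < s := lt_of_lt_of_le one_pos hs
  set Q : Fin n → ℝ := fun a => (1 / s) * min 1 (c * A a) with hQdef
  have hminpos : ∀ a, 0 < min 1 (c * A a) := fun a =>
    lt_min one_pos (mul_pos hc (hA a))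
  have hQpos : ∀ a, 0 < Q a := fun a => mul_pos (by positivity) (hminpos a)
  have hQle : ∀ a, Q a ≤ 1 / s := fun a => by
    have : min 1 (c * A a) ≤ 1 := min_le_left _ _
    calc Q a = (1 / s) * min 1 (c * A a) := rfl
      _ ≤ (1 / s) * 1 := by
          exact mul_le_mul_of_nonneg_left this (by positivity)
      _ = 1 / s := mul_one _
  have hQsum : (∑ a : Fin n, Q a) = 1 := by
    have : (∑ a : Fin n, Q a) = (1 / s) * ∑ a : Fin n, min 1 (c * A a) := by
      rw [← Finset.mul_sum]
    rw [this, hcs]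
    field_simp
  refine ⟨fun a => (hQpos a).le, hQle, hQsum, ?_⟩
  intro P hP0 hP1 hPsum
  have step1 : ∀ a : Fin n,
      Q a * Real.log (Q a / A a) + (P a - Q a) * (Real.log (Q a / A a) + 1)
        ≤ P a * Real.log (P a / A a) :=
    fun a => key_ineq (P a) (Q a) (A a) (hP0 a) (hQpos a) (hA a)
  have step2 : ∀ a : Fin n,
      (P a - Q a) * (Real.log c - Real.log s) ≤ (P a - Q a) * Real.log (Q a / A a) := by
    intro a
    rcases le_or_gt (c * A a) 1 with h | h
    · have hQa : Q a = c * A a / s := by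
        simp only [hQdef, min_eq_right h]; ring
      have hlog : Real.log (Q a / A a) = Real.log c - Real.log s := by
        have heq : Q a / A a = c / s := by
          rw [hQa]; field_simp [(hA a).ne', hs0.ne']
        rw [heq, Real.log_div hc.ne' hs0.ne']
      rw [hlog]
    · have hQa : Q a = 1 / s := by
        simp only [hQdef, min_eq_left h.le]; ring
      have hPle : P a - Q a ≤ 0 := by
        have := hP1 a; rw [hQa]; linarith
      have hAa : 0 < A a := hA a
      have hlog : Real.log (Q a / A a) ≤ Real.log c - Real.log s := by
        rw [hQa]
        have hle : (1 / s) / A a ≤ c / s := by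
          rw [div_div, div_le_div_iff₀ (by positivity) hs0]
          nlinarith
        calc Real.log ((1 / s) / A a) ≤ Real.log (c / s) :=
              Real.log_le_log (by positivity) hle
          _ = Real.log c - Real.log s := Real.log_div hc.ne' hs0.ne'
      exact mul_le_mul_of_nonpos_left hlog hPle
  have hsumPQ : ∑ a : Fin n, (P a - Q a) = 0 := by
    rw [Finset.sum_sub_distrib, hPsum, hQsum, sub_self]
  have hL0 : ∑ a : Fin n, (P a - Q a) * (Real.log c - Real.log s) = 0 := by
    rw [← Finset.sum_mul, hsumPQ, zero_mul]
  have key : (∑ a : Fin n, Q a * Real.log (Q a / A a))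
      ≤ ∑ a : Fin n, P a * Real.log (P a / A a) := by
    calc (∑ a : Fin n, Q a * Real.log (Q a / A a))
        = (∑ a : Fin n, Q a * Real.log (Q a / A a))
            + (∑ a : Fin n, (P a - Q a) * (Real.log c - Real.log s))
            + (∑ a : Fin n, (P a - Q a)) := by
          rw [hL0, hsumPQ]; ring
      _ ≤ (∑ a : Fin n, Q a * Real.log (Q a / A a))
            + (∑ a : Fin n, (P a - Q a) * Real.log (Q a / A a))
            + (∑ a : Fin n, (P a - Q a)) := by
          exact add_le_add_left
            (add_le_add_right (Finset.sum_le_sum fun a _ => step2 a) _) _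
      _ = ∑ a : Fin n, (Q a * Real.log (Q a / A a)
            + (P a - Q a) * (Real.log (Q a / A a) + 1)) := by
          rw [← Finset.sum_add_distrib, ← Finset.sum_add_distrib]
          exact Finset.sum_congr rfl fun a _ => by ring
      _ ≤ ∑ a : Fin n, P a * Real.log (P a / A a) :=
          Finset.sum_le_sum fun a _ => step1 a
  exact key
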